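/- arXiv:1705.03538 — 2 statements merged into one kernel-verified Lean document; each statement's English description precedes it below -/
import Mathlib

section
/- Any shape of the triangular lattice admitting a 6-fold rotational symmetry has its center of rotation at a lattice vertex: if S is a shape of G_D and ρ is a rotation of order 6 with ρ(S) = S, then the center of ρ is a vertex of G_D. -/
/-- The sixth root of unity `ω = e^{iπ/3}` generating the triangular lattice. -/
noncomputable def omg : ℂ := Complex.exp ((Real.pi : ℂ) * Complex.I / 3)

/-- The vertex set of the triangular lattice drawing `G_D`: the Eisenstein integers. -/
def TriLattice : Set ℂ := {z | ∃ a b : ℤ, z = (a : ℂ) + (b : ℂ) * omg}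

/-- An edge of `G_D`: a unit segment between two lattice vertices at distance 1. -/
def IsEdgeGD (e : Set ℂ) : Prop :=
  ∃ u v : ℂ, u ∈ TriLattice ∧ v ∈ TriLattice ∧ ‖u - v‖ = 1 ∧ e = segment ℝ u v

/-- A face of `G_D`: a unit equilateral triangle with lattice vertices. -/
def IsFaceGD (f : Set ℂ) : Prop :=
  ∃ u v w : ℂ, u ∈ TriLattice ∧ v ∈ TriLattice ∧ w ∈ TriLattice ∧
    ‖u - v‖ = 1 ∧ ‖v - w‖ = 1 ∧ ‖u - w‖ = 1 ∧
    f = convexHull ℝ {u, v, w}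

/-- A shape: a nonempty connected finite union of edges and faces of `G_D`. -/
def IsShape (S : Set ℂ) : Prop :=
  S.Nonempty ∧ IsConnected S ∧
    ∃ F : Set (Set ℂ), F.Finite ∧ (∀ e ∈ F, IsEdgeGD e ∨ IsFaceGD e) ∧ S = ⋃₀ F

/-- The size of a shape: the number of lattice vertices lying in it. -/
noncomputable def shapeSize (S : Set ℂ) : ℕ := (TriLattice ∩ S).ncard

/-- `σ` is a similarity of the plane with (positive) ratio `r`. -/
def IsSimilarityMap (σ : ℂ → ℂ) (r : ℝ) : Prop :=
  ∀ p q : ℂ, dist (σ p) (σ q) = r * dist p q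

/-- Two sets are similar (equivalent shapes). -/
def SimilarShapes (S T : Set ℂ) : Prop :=
  ∃ σ : ℂ → ℂ, ∃ r : ℝ, 0 < r ∧ IsSimilarityMap σ r ∧ T = σ '' S

/-- A minimal shape: no equivalent shape has smaller size. -/
def MinimalShape (S : Set ℂ) : Prop :=
  IsShape S ∧ ∀ T : Set ℂ, IsShape T → SimilarShapes S T → shapeSize S ≤ shapeSize T

/- ### Auxiliary lemmas -/

lemma omg_cube : omg ^ 3 = -1 := by
  rw [omg, ← Complex.exp_nat_mul]
  norm_num
  rw [show (3 : ℂ) * ((Real.pi : ℂ) * Complex.I / 3) = (Real.pi : ℂ) * Complex.I by ring]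
  exact Complex.exp_pi_mul_I

lemma omg_re : omg.re = 1 / 2 := by
  have h : ((Real.pi : ℂ) * Complex.I / 3) = ((Real.pi / 3 : ℝ) : ℂ) * Complex.I := by
    push_cast; ring
  rw [omg, h, Complex.exp_ofReal_mul_I_re, Real.cos_pi_div_three]

lemma omg_ne_neg_one : omg ≠ -1 := by
  intro h
  have := congrArg Complex.re h
  rw [omg_re] at this
  norm_num at this

lemma omg_sq : omg ^ 2 = omg - 1 := by
  have h : (omg + 1) * (omg ^ 2 - omg + 1) = 0 := by linear_combination omg_cube
  rcases mul_eq_zero.1 h with h1 | h2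
  · exact absurd (by linear_combination h1) omg_ne_neg_one
  · linear_combination h2

/-- A maximizer of the distance to `c` on a segment with endpoints in `S` must be an
endpoint. -/
lemma seg_max {S : Set ℂ} {c a b p : ℂ} (ha : a ∈ S) (hb : b ∈ S)
    (hp : p ∈ segment ℝ a b)
    (hmax : ∀ y ∈ S, dist y c ≤ dist p c) : p = a ∨ p = b := by
  rw [segment_eq_image] at hp
  obtain ⟨t, ⟨ht0, ht1⟩, hpt⟩ := hp
  simp only at hpt
  have key : ∀ y ∈ S, Complex.normSq (y - c) ≤ Complex.normSq (p - c) := by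
    intro y hy
    have h := hmax y hy
    rw [Complex.dist_eq, Complex.dist_eq] at h
    have := pow_le_pow_left₀ (norm_nonneg _) h 2
    rwa [Complex.sq_norm, Complex.sq_norm] at this
  have hid : Complex.normSq (p - c) =
      (1 - t) * Complex.normSq (a - c) + t * Complex.normSq (b - c)
        - t * (1 - t) * Complex.normSq (a - b) := by
    rw [← hpt]
    simp only [Complex.real_smul, Complex.normSq_apply, Complex.add_re, Complex.add_im,
      Complex.sub_re, Complex.sub_im, Complex.mul_re, Complex.mul_im, Complex.ofReal_re,
      Complex.ofReal_im]
    ring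
  rcases eq_or_lt_of_le ht0 with h0 | h0
  · left; rw [← hpt, ← h0]; simp
  rcases eq_or_lt_of_le ht1 with h1 | h1
  · right; rw [← hpt, h1]; simp
  have hA := key a ha
  have hB := key b hb
  have e1 : (1 - t) * (Complex.normSq (p - c) - Complex.normSq (a - c)) ≥ 0 :=
    mul_nonneg (by linarith) (by linarith)
  have e2 : t * (Complex.normSq (p - c) - Complex.normSq (b - c)) ≥ 0 :=
    mul_nonneg (by linarith) (by linarith)
  have e3 : t * (1 - t) * Complex.normSq (a - b) ≤ 0 := by nlinarith [hid, e1, e2]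
  have hD : Complex.normSq (a - b) ≤ 0 := by
    nlinarith [mul_pos h0 (show (0:ℝ) < 1 - t by linarith)]
  have hab : a = b :=
    sub_eq_zero.1 (Complex.normSq_eq_zero.1 (le_antisymm hD (Complex.normSq_nonneg _)))
  left
  rw [← hpt, hab, ← add_smul]
  simp

/-- Any point of a shape at maximal distance from `c` is a lattice vertex. -/
lemma max_is_vertex {F : Set (Set ℂ)} (hFmem : ∀ e ∈ F, IsEdgeGD e ∨ IsFaceGD e)
    {c p : ℂ} (hp : p ∈ ⋃₀ F) (hmax : ∀ y ∈ ⋃₀ F, dist y c ≤ dist p c) :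
    p ∈ TriLattice := by
  obtain ⟨e, heF, hpe⟩ := hp
  have heS : e ⊆ ⋃₀ F := Set.subset_sUnion_of_mem heF
  rcases hFmem e heF with ⟨u, v, hu, hv, _, rfl⟩ | ⟨u, v, w, hu, hv, hw, _, _, _, rfl⟩
  · rcases seg_max (heS (left_mem_segment ℝ u v)) (heS (right_mem_segment ℝ u v))
      hpe hmax with h | h
    · rw [h]; exact hu
    · rw [h]; exact hv
  · have hins : ({u, v, w} : Set ℂ) = insert u {v, w} := rfl
    rw [hins, convexHull_insert ⟨v, by simp⟩] at hpe
    rw [mem_convexJoin] at hpe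
    obtain ⟨x, hx, q, hq, hpseg⟩ := hpe
    rw [Set.mem_singleton_iff] at hx
    rw [hx] at hpseg
    rw [convexHull_pair] at hq
    have hqS : q ∈ ⋃₀ F := heS (by
      rw [hins, convexHull_insert ⟨v, by simp⟩, mem_convexJoin]
      exact ⟨u, rfl, q, by rwa [convexHull_pair], right_mem_segment ℝ u q⟩)
    have huS : u ∈ ⋃₀ F := heS (subset_convexHull ℝ _ (by simp))
    have hvS : v ∈ ⋃₀ F := heS (subset_convexHull ℝ _ (by simp))
    have hwS : w ∈ ⋃₀ F := heS (subset_convexHull ℝ _ (by simp))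
    rcases seg_max huS hqS hpseg hmax with h | h
    · rw [h]; exact hu
    · subst h
      rcases seg_max hvS hwS hq hmax with h | h
      · rw [h]; exact hv
      · rw [h]; exact hw

/-- a shape with a 6-fold rotational symmetry has its center of rotation at
a lattice vertex. -/
theorem sixfold_center_is_vertex (S : Set ℂ) (c : ℂ) (θ : ℝ) (ρ : ℂ → ℂ)
    (hS : IsShape S)
    (hρ : ρ = fun p => c + Complex.exp ((θ : ℂ) * Complex.I) * (p - c))
    (hinv : ρ '' S = S)
    (h6 : ρ^[6] = id)
    (hmin : ∀ j : ℕ, 0 < j → j < 6 → ρ^[j] ≠ id) :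
    c ∈ TriLattice := by
  set ζ : ℂ := Complex.exp ((θ : ℂ) * Complex.I) with hζdef
  obtain ⟨hne, hconn, F, hFfin, hFmem, hFeq⟩ := hS
  -- the rotation formula for iterates
  have hiter : ∀ (j : ℕ) (p : ℂ), ρ^[j] p = c + ζ ^ j * (p - c) := by
    intro j
    induction j with
    | zero => intro p; simp
    | succ n ih =>
      intro p
      rw [Function.iterate_succ_apply', ih, hρ]
      simp only
      ring
  -- ζ is a primitive sixth root of unity, hence ζ² = ζ - 1
  have hζ6 : ζ ^ 6 = 1 := by
    have h := congrFun h6 (c + 1)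
    rw [hiter 6 (c + 1)] at h
    simp at h
    linear_combination h
  have hzj : ∀ j : ℕ, ζ ^ j = 1 → ρ^[j] = id := by
    intro j hj
    funext p
    rw [hiter, hj]
    simp
  have hζ2 : ζ ^ 2 ≠ 1 := fun h => hmin 2 (by norm_num) (by norm_num) (hzj 2 h)
  have hζ3 : ζ ^ 3 ≠ 1 := fun h => hmin 3 (by norm_num) (by norm_num) (hzj 3 h)
  have hζsq : ζ ^ 2 = ζ - 1 := by
    have h0 : (ζ ^ 3 - 1) * ((ζ + 1) * (ζ ^ 2 - ζ + 1)) = 0 := by linear_combination hζ6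
    rcases mul_eq_zero.1 h0 with h1 | h1
    · exact absurd (by linear_combination h1) hζ3
    rcases mul_eq_zero.1 h1 with h2 | h2
    · exact absurd (by linear_combination (ζ - 1) * h2) hζ2
    · linear_combination h2
  -- S is compact, take a point of S at maximal distance from c
  have hcomp : IsCompact S := by
    rw [hFeq, Set.sUnion_eq_biUnion]
    refine hFfin.isCompact_biUnion fun e he => ?_
    rcases hFmem e he with ⟨u, v, _, _, _, rfl⟩ | ⟨u, v, w, _, _, _, _, _, _, rfl⟩
    · rw [← convexHull_pair]
      exact (Set.toFinite _).isCompact_convexHull ℝ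
    · exact (Set.toFinite _).isCompact_convexHull ℝ
  obtain ⟨p, hpS, hpmax⟩ := hcomp.exists_isMaxOn hne
    ((continuous_id.dist continuous_const).continuousOn (f := fun y => dist y c))
  rw [isMaxOn_iff] at hpmax
  -- p and ρ p are both lattice vertices
  have hpL : p ∈ TriLattice := by
    rw [hFeq] at hpS hpmax
    exact max_is_vertex hFmem hpS hpmax
  have hq : ρ p = c + ζ * (p - c) := by rw [hρ]
  have hqS : ρ p ∈ S := by rw [← hinv]; exact ⟨p, hpS, rfl⟩
  have hqdist : dist (ρ p) c = dist p c := by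
    rw [Complex.dist_eq, Complex.dist_eq, hq]
    rw [show c + ζ * (p - c) - c = ζ * (p - c) by ring, norm_mul, hζdef,
      Complex.norm_exp_ofReal_mul_I, one_mul]
  have hqL : ρ p ∈ TriLattice := by
    rw [hFeq] at hqS
    refine max_is_vertex (c := c) hFmem hqS fun y hy => ?_
    rw [hqdist]
    rw [hFeq] at hpmax
    exact hpmax y hy
  -- express c in terms of p and ρ p
  have hc : c = ζ * (ρ p) - ζ * p + p := by
    linear_combination (-ζ) * hq + (c - p) * hζsq
  -- ζ = ω or ζ = 1 - ω
  have hcase : (ζ - omg) * (ζ + omg - 1) = 0 := by linear_combination hζsq - omg_sq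
  obtain ⟨a1, b1, hq1⟩ := hqL
  obtain ⟨a2, b2, hp1⟩ := hpL
  rcases mul_eq_zero.1 hcase with h | h
  · have hz : ζ = omg := by linear_combination h
    refine ⟨-b1 + b2 + a2, a1 + b1 - a2, ?_⟩
    rw [hc, hz, hq1, hp1]
    push_cast
    linear_combination ((b1 : ℂ) - b2) * omg_sq
  · have hz : ζ = 1 - omg := by linear_combination h
    refine ⟨a1 + b1 - b2, -a1 + a2 + b2, ?_⟩
    rw [hc, hz, hq1, hp1]
    push_cast
    linear_combination ((b2 : ℂ) - b1) * omg_sq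
end

section
/- Classification of centers of lattice-preserving rotations of order 2: if ρ is a rotation of the plane by 180° whose center c satisfies ρ(L) = L, where L is the vertex set of the triangular lattice, then c is either a lattice vertex or the midpoint of an edge of the lattice or the centroid of a face of the lattice. -/
lemma omg_eq : omg = (1/2 : ℂ) + ((Real.sqrt 3 / 2 : ℝ) : ℂ) * Complex.I := by
  have : ((Real.pi : ℂ) * Complex.I / 3) = ((Real.pi / 3 : ℝ) : ℂ) * Complex.I := by
    push_cast; ring
  rw [omg, this, Complex.exp_mul_I, ← Complex.ofReal_cos, ← Complex.ofReal_sin,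
    Real.cos_pi_div_three, Real.sin_pi_div_three]
  push_cast; ring

lemma abs_omg : ‖omg‖ = 1 := by
  rw [omg, Complex.norm_exp]
  simp

lemma abs_one_sub_omg : ‖1 - omg‖ = 1 := by
  have h : 1 - omg = Complex.mk (1/2) (-(Real.sqrt 3 / 2)) := by
    rw [omg_eq, Complex.mk_eq_add_mul_I]
    push_cast; ring
  rw [h, Complex.norm_def, Complex.normSq_mk]
  have h3 : Real.sqrt 3 ^ 2 = 3 := Real.sq_sqrt (by norm_num)
  rw [show (1/2 : ℝ) * (1/2) + -(Real.sqrt 3 / 2) * -(Real.sqrt 3 / 2)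
      = 1/4 + Real.sqrt 3 ^ 2 / 4 by ring, h3]
  norm_num

/-- classification of centers of lattice-preserving rotations of order 2:
the center is a lattice vertex, an edge midpoint, or a face centroid. -/
theorem order_two_center_classification (c : ℂ)
    (h : (fun p => 2 * c - p) '' TriLattice = TriLattice) :
    c ∈ TriLattice ∨
      (∃ u v : ℂ, u ∈ TriLattice ∧ v ∈ TriLattice ∧ ‖u - v‖ = 1 ∧ c = (u + v) / 2) ∨
      (∃ u v w : ℂ, u ∈ TriLattice ∧ v ∈ TriLattice ∧ w ∈ TriLattice ∧
        ‖u - v‖ = 1 ∧ ‖v - w‖ = 1 ∧ ‖u - w‖ = 1 ∧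
        c = (u + v + w) / 3) := by
  have h0 : (0 : ℂ) ∈ TriLattice := ⟨0, 0, by simp⟩
  have h2c : 2 * c ∈ TriLattice := by
    rw [← h]; exact ⟨0, h0, by simp⟩
  obtain ⟨a, b, hab⟩ := h2c
  rcases Int.even_or_odd a with ⟨m, hm⟩ | ⟨m, hm⟩ <;>
    rcases Int.even_or_odd b with ⟨n, hn⟩ | ⟨n, hn⟩
  · -- a, b even: c is a lattice point
    left
    refine ⟨m, n, ?_⟩
    have : (a : ℂ) = 2 * m := by rw [hm]; push_cast; ring
    have hb : (b : ℂ) = 2 * n := by rw [hn]; push_cast; ring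
    rw [this, hb] at hab
    linear_combination hab / 2
  · -- a even, b odd: edge in direction ω
    right; left
    refine ⟨(m : ℂ) + ((n : ℂ) + 1) * omg, (m : ℂ) + (n : ℂ) * omg,
      ⟨m, n + 1, by push_cast; ring⟩, ⟨m, n, rfl⟩, by
        rw [show ((m : ℂ) + ((n : ℂ) + 1) * omg) - ((m : ℂ) + (n : ℂ) * omg) = omg by ring]
        exact abs_omg, ?_⟩
    have ha : (a : ℂ) = 2 * m := by rw [hm]; push_cast; ring
    have hb : (b : ℂ) = 2 * n + 1 := by rw [hn]; push_cast; ring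
    rw [ha, hb] at hab
    linear_combination hab / 2
  · -- a odd, b even: edge in direction 1
    right; left
    refine ⟨((m : ℂ) + 1) + (n : ℂ) * omg, (m : ℂ) + (n : ℂ) * omg,
      ⟨m + 1, n, by push_cast; ring⟩, ⟨m, n, rfl⟩, by norm_num, ?_⟩
    have ha : (a : ℂ) = 2 * m + 1 := by rw [hm]; push_cast; ring
    have hb : (b : ℂ) = 2 * n := by rw [hn]; push_cast; ring
    rw [ha, hb] at hab
    linear_combination hab / 2
  · -- a, b odd: edge in direction 1 - ω
    right; left
    refine ⟨((m : ℂ) + 1) + (n : ℂ) * omg, (m : ℂ) + ((n : ℂ) + 1) * omg,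
      ⟨m + 1, n, by push_cast; ring⟩, ⟨m, n + 1, by push_cast; ring⟩, by
        rw [show (((m : ℂ) + 1) + (n : ℂ) * omg) - ((m : ℂ) + ((n : ℂ) + 1) * omg)
          = 1 - omg by ring]
        exact abs_one_sub_omg, ?_⟩
    have ha : (a : ℂ) = 2 * m + 1 := by rw [hm]; push_cast; ring
    have hb : (b : ℂ) = 2 * n + 1 := by rw [hn]; push_cast; ring
    rw [ha, hb] at hab
    linear_combination hab / 2
end
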